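/- Let γ ∈ (0,1), i.e. lim_{n→∞} ℱ(n+1)/ℱ(n) = γ with 0 < γ < 1. Then, with m_n and p_n defined from any admissible extension G, for every fixed x ∈ ℤ one has P(X_{(n)} ≤ m_n + x) − p_n^{γ^x} → 0 as n → ∞. -/

import Mathlib

open MeasureTheory ProbabilityTheory Filter

/-- An admissible extension of the tail `ℱ : ℕ → ℝ` of a discrete distribution:
a positive, continuous, strictly decreasing, log-convex function on `[0,∞)`
tending to `0` at `+∞` and agreeing with `ℱ` on the integers. -/
structure AdmissibleExt (Ftail : ℕ → ℝ) : Type where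
  G : ℝ → ℝ
  pos : ∀ x ∈ Set.Ici (0 : ℝ), 0 < G x
  cont : ContinuousOn G (Set.Ici 0)
  anti : StrictAntiOn G (Set.Ici 0)
  logConvex : ConvexOn ℝ (Set.Ici 0) fun x => Real.log (G x)
  tendsto_zero : Tendsto G atTop (nhds 0)
  agrees : ∀ n : ℕ, G n = Ftail n


lemma log_one_sub_bound {u : ℝ} (h0 : 0 ≤ u) (h2 : u ≤ 1/2) :
    |Real.log (1-u) + u| ≤ 2*u^2 := by
  have h1 : (0:ℝ) < 1 - u := by linarith
  have hup : Real.log (1-u) ≤ -u := by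
    have := Real.log_le_sub_one_of_pos h1; linarith
  have h' := Real.log_le_sub_one_of_pos (x := (1-u)⁻¹) (by positivity)
  rw [Real.log_inv] at h'
  have heq : (1-u)⁻¹ - 1 = u / (1-u) := by field_simp; ring
  rw [heq] at h'
  have hq : u / (1-u) ≤ u + 2*u^2 := by
    rw [div_le_iff₀ h1]; nlinarith
  rw [abs_le]; constructor <;> nlinarith

set_option maxHeartbeats 800000 in
lemma ratio_pow {Ftail : ℕ → ℝ} (hsupp : ∀ t, 0 < Ftail t) {γ : ℝ}
    (hγ : Tendsto (fun t : ℕ => Ftail (t+1)/Ftail t) atTop (nhds γ))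
    (c : ℕ) {a : ℕ → ℕ} (ha : Tendsto a atTop atTop) :
    Tendsto (fun n => Ftail (a n + c) / Ftail (a n)) atTop (nhds (γ ^ c)) := by
  induction c with
  | zero =>
    simpa using tendsto_const_nhds.congr
      (fun n => by simp [div_self (hsupp (a n)).ne'])
  | succ c ih =>
    have hac : Tendsto (fun n => a n + c) atTop atTop :=
      tendsto_atTop_mono (fun n => Nat.le_add_right (a n) c) ha
    have h1 : Tendsto (fun n => Ftail (a n + c + 1)/Ftail (a n + c)) atTop (nhds γ) :=
      hγ.comp hac
    have h2 := h1.mul ih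
    rw [← pow_succ'] at h2
    refine h2.congr fun n => ?_
    have h3 := (hsupp (a n)).ne'
    have h4 := (hsupp (a n + c)).ne'
    field_simp
    ring

lemma prob_max_le {Ω : Type} [MeasurableSpace Ω] (μ : Measure Ω) [IsProbabilityMeasure μ]
    (X : ℕ → Ω → ℕ) (hmeas : ∀ i, Measurable (X i))
    (hindep : iIndepFun X μ)
    (hident : ∀ i, μ.map (X i) = μ.map (X 0)) (n k : ℕ) :
    (μ {ω | (Finset.range n).sup (fun i => X i ω) ≤ k}).toReal
      = (1 - (μ {ω | k < X 0 ω}).toReal)^n := by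
  have hset : {ω | (Finset.range n).sup (fun i => X i ω) ≤ k}
      = ⋂ i ∈ Finset.range n, X i ⁻¹' (Set.Iic k) := by
    ext ω; simp [Finset.sup_le_iff]
  have hprod : μ {ω | (Finset.range n).sup (fun i => X i ω) ≤ k}
      = ∏ i ∈ Finset.range n, μ (X i ⁻¹' (Set.Iic k)) := by
    rw [hset]
    exact hindep.meas_biInter (fun i _ => ⟨Set.Iic k, measurableSet_Iic, rfl⟩)
  have hone : ∀ i, μ (X i ⁻¹' (Set.Iic k)) = μ (X 0 ⁻¹' (Set.Iic k)) := by
    intro i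
    rw [← Measure.map_apply (hmeas i) measurableSet_Iic, hident i,
      Measure.map_apply (hmeas 0) measurableSet_Iic]
  rw [hprod, Finset.prod_congr rfl (fun i _ => hone i), Finset.prod_const,
    Finset.card_range, ENNReal.toReal_pow]
  congr 1
  have hms : MeasurableSet (X 0 ⁻¹' (Set.Iic k)) := (hmeas 0) measurableSet_Iic
  have hcompl : (X 0 ⁻¹' (Set.Iic k))ᶜ = {ω | k < X 0 ω} := by
    ext ω
    simp only [Set.mem_compl_iff, Set.mem_preimage, Set.mem_Iic, Set.mem_setOf_eq, not_le]
  have hadd := measure_add_measure_compl (μ := μ) hms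
  rw [hcompl] at hadd
  have h1 : μ (X 0 ⁻¹' (Set.Iic k)) ≠ ⊤ := measure_ne_top μ _
  have h2 : μ {ω | k < X 0 ω} ≠ ⊤ := measure_ne_top μ _
  have h3 := congrArg ENNReal.toReal hadd
  rw [ENNReal.toReal_add h1 h2, measure_univ, ENNReal.toReal_one] at h3
  linarith

set_option maxHeartbeats 3200000 in
/-- **Theorem (γ ∈ (0,1) case).** For i.i.d. `ℕ`-valued random variables whose tail ratio
`ℱ(n+1)/ℱ(n)` tends to `γ ∈ (0,1)`, with `mₙ`, `θₙ`, `pₙ` defined from any admissible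
extension `G`, for every fixed `x ∈ ℤ` one has
`P(X₍ₙ₎ ≤ mₙ + x) − pₙ^(γ^x) → 0`, where `pₙ^(γ^x) = exp(−θₙ γ^x)`. -/
theorem max_iid_limit_of_ratio_tendsto_gamma_mem_Ioo
    {Ω : Type} [MeasurableSpace Ω] (μ : Measure Ω) [IsProbabilityMeasure μ]
    (X : ℕ → Ω → ℕ) (hmeas : ∀ i, Measurable (X i))
    (hindep : iIndepFun X μ)
    (hident : ∀ i, μ.map (X i) = μ.map (X 0))
    (Ftail : ℕ → ℝ) (hFtail : ∀ t : ℕ, Ftail t = (μ {ω | t < X 0 ω}).toReal)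
    (hsupp : ∀ t : ℕ, 0 < Ftail t)
    (γ : ℝ) (hγ0 : 0 < γ) (hγ1 : γ < 1)
    (hγ : Tendsto (fun t : ℕ => Ftail (t + 1) / Ftail t) atTop (nhds γ))
    (E : AdmissibleExt Ftail)
    (x : ℕ → ℝ) (hx0 : ∀ n, 2 ≤ n → 0 ≤ x n)
    (hx : ∀ n, 2 ≤ n → E.G (x n) = 1 / n)
    (m : ℕ → ℤ) (hm : ∀ n, m n = ⌊x n + 1 / 2⌋)
    (θ : ℕ → ℝ) (hθ : ∀ n, θ n = E.G (m n) / E.G (x n))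
    (p : ℕ → ℝ) (hp : ∀ n, p n = Real.exp (-θ n)) :
    ∀ z : ℤ,
      Tendsto (fun n =>
          (μ {ω | (((Finset.range n).sup fun i => X i ω : ℕ) : ℤ) ≤ m n + z}).toReal -
            Real.exp (-(θ n * γ ^ z)))
        atTop (nhds 0) := by
  intro z
  have hγz : (0:ℝ) < γ ^ z := zpow_pos hγ0 z
  -- x n → ∞
  have hxtop : Tendsto x atTop atTop := by
    rw [tendsto_atTop]
    intro M
    have hGM : 0 < E.G (max M 0) := E.pos _ (Set.mem_Ici.2 (le_max_right _ _))
    have h1n : Tendsto (fun n : ℕ => 1/(n:ℝ)) atTop (nhds 0) :=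
      tendsto_one_div_atTop_nhds_zero_nat
    filter_upwards [h1n.eventually_lt_const hGM, eventually_ge_atTop 2] with n h1 h2
    by_contra hcon
    push_neg at hcon
    have hxM : x n < max M 0 := lt_of_lt_of_le hcon (le_max_left _ _)
    have := E.anti (Set.mem_Ici.2 (hx0 n h2)) (Set.mem_Ici.2 (le_max_right M 0)) hxM
    rw [hx n h2] at this
    linarith
  -- m n bounds
  have hmub : ∀ n, (m n : ℝ) ≤ x n + 1/2 := fun n => by
    rw [hm n]; exact_mod_cast Int.floor_le _
  have hmlb : ∀ n, x n - 1/2 < (m n : ℝ) := fun n => by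
    rw [hm n]
    have := Int.sub_one_lt_floor (x n + 1/2)
    push_cast at this ⊢
    linarith
  have hmR : Tendsto (fun n => (m n : ℝ)) atTop atTop := by
    apply tendsto_atTop_mono (fun n => (hmlb n).le)
    exact tendsto_atTop_add_const_right _ (-(1/2)) hxtop |>.congr (fun n => by ring)
  have hmZ : Tendsto m atTop atTop := tendsto_intCast_atTop_iff.mp hmR
  set j : ℕ → ℕ := fun n => (m n).toNat with hjdef
  set k : ℕ → ℕ := fun n => (m n + z).toNat with hkdef
  have hm0 : ∀ᶠ n in atTop, 0 ≤ m n := hmZ.eventually_ge_atTop 0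
  have hmz0 : ∀ᶠ n in atTop, 0 ≤ m n + z := by
    filter_upwards [hmZ.eventually_ge_atTop (-z)] with n h; omega
  have hj : ∀ᶠ n in atTop, (j n : ℤ) = m n := by
    filter_upwards [hm0] with n h; simp [hjdef, Int.toNat_of_nonneg h]
  have hk : ∀ᶠ n in atTop, (k n : ℤ) = m n + z := by
    filter_upwards [hmz0] with n h; simp [hkdef, Int.toNat_of_nonneg h]
  have hjtop : Tendsto j atTop atTop := by
    rw [tendsto_atTop]
    intro b
    filter_upwards [hmZ.eventually_ge_atTop (b : ℤ), hj] with n h1 h2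
    exact_mod_cast h2 ▸ h1
  have hktop : Tendsto k atTop atTop := by
    rw [tendsto_atTop]
    intro b
    filter_upwards [hmZ.eventually_ge_atTop ((b : ℤ) - z), hk] with n h1 h2
    have : (b:ℤ) ≤ (k n : ℤ) := by omega
    exact_mod_cast this
  -- Ftail tends to 0 along k
  have hFtop : Tendsto (fun t : ℕ => Ftail t) atTop (nhds 0) :=
    (E.tendsto_zero.comp tendsto_natCast_atTop_atTop).congr fun t => E.agrees t
  have hFk0 : Tendsto (fun n => Ftail (k n)) atTop (nhds 0) := hFtop.comp hktop
  -- ratio convergence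
  have hρ : Tendsto (fun n => Ftail (k n) / Ftail (j n)) atTop (nhds (γ ^ z)) := by
    rcases le_or_gt 0 z with hz | hz
    · have hkj : ∀ᶠ n in atTop, k n = j n + z.toNat := by
        filter_upwards [hm0] with n h
        simp only [hjdef, hkdef]; omega
      have := ratio_pow hsupp hγ z.toNat hjtop
      rw [show γ ^ z.toNat = γ ^ z by rw [← zpow_natCast, Int.toNat_of_nonneg hz]] at this
      refine this.congr' ?_
      filter_upwards [hkj] with n h; rw [h]
    · have hjk : ∀ᶠ n in atTop, j n = k n + (-z).toNat := by
        filter_upwards [hmz0] with n h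
        simp only [hjdef, hkdef]; omega
      have h1 := ratio_pow hsupp hγ (-z).toNat hktop
      have h2 := h1.inv₀ (by positivity)
      rw [show (γ ^ (-z).toNat)⁻¹ = γ ^ z by
        rw [← zpow_natCast, Int.toNat_of_nonneg (by omega : 0 ≤ -z), ← zpow_neg, neg_neg]] at h2
      refine h2.congr' ?_
      filter_upwards [hjk] with n h
      rw [h, inv_div]
  -- θ facts
  have hθeq : ∀ᶠ n in atTop, θ n = n * Ftail (j n) := by
    filter_upwards [hj, eventually_ge_atTop 2] with n h1 h2
    rw [hθ n, hx n h2]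
    have : E.G ((m n : ℝ)) = Ftail (j n) := by
      rw [← E.agrees (j n)]
      congr 1
      exact_mod_cast congrArg (fun a : ℤ => (a : ℝ)) h1.symm
    rw [this]
    have hn0 : (n:ℝ) ≠ 0 := by positivity
    field_simp
  have hθpos : ∀ᶠ n in atTop, 0 < θ n := by
    filter_upwards [hθeq, eventually_ge_atTop 2] with n h1 h2
    rw [h1]
    have : (0:ℝ) < n := by positivity
    exact mul_pos this (hsupp (j n))
  -- θ upper bound
  have hθbd : ∀ᶠ n in atTop, θ n ≤ 2/γ := by
    set b : ℕ → ℕ := fun n => (⌊x n⌋ - 2).toNat with hbdef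
    have hx3 : ∀ᶠ n in atTop, (3:ℝ) ≤ x n := hxtop.eventually_ge_atTop 3
    have hbR : ∀ᶠ n in atTop, ((b n : ℝ) = (⌊x n⌋ : ℝ) - 2) := by
      filter_upwards [hx3] with n h
      have h3 : (3:ℤ) ≤ ⌊x n⌋ := Int.le_floor.mpr (by exact_mod_cast h)
      have hb : ((b n : ℤ)) = ⌊x n⌋ - 2 := by simp only [hbdef]; omega
      exact_mod_cast congrArg (fun t : ℤ => (t:ℝ)) hb
    have hbtop : Tendsto b atTop atTop := by
      rw [tendsto_atTop]
      intro N
      filter_upwards [hxtop.eventually_ge_atTop ((N:ℝ) + 3), hbR] with n h1 h2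
      have hf : x n - 1 < (⌊x n⌋ : ℝ) := Int.sub_one_lt_floor (x n)
      have : (N : ℝ) ≤ (b n : ℝ) := by rw [h2]; linarith
      exact_mod_cast this
    have hratb : Tendsto (fun n => Ftail (b n) / Ftail (b n + 1)) atTop (nhds γ⁻¹) := by
      have h1 := (hγ.inv₀ hγ0.ne').comp hbtop
      refine h1.congr fun n => ?_
      simp [inv_div]
    have hratbd : ∀ᶠ n in atTop, Ftail (b n) / Ftail (b n + 1) ≤ 2/γ := by
      have hlt : γ⁻¹ < 2/γ := by
        rw [div_eq_mul_inv]
        nlinarith [inv_pos.mpr hγ0]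
      filter_upwards [hratb.eventually_lt_const hlt] with n h using h.le
    filter_upwards [hx3, hratbd, eventually_ge_atTop 2, hbR] with n h3 hrb h2 hbRn
    have hxn0 : 0 ≤ x n := by linarith
    set B := (b n : ℝ) with hBdef
    have hB0 : (0:ℝ) ≤ B := Nat.cast_nonneg _
    have hfl : x n - 1 < (⌊x n⌋:ℝ) := Int.sub_one_lt_floor (x n)
    have hfu : ((⌊x n⌋:ℝ)) ≤ x n := Int.floor_le (x n)
    have hL2 : 2 ≤ x n - B := by rw [show B = ((⌊x n⌋ : ℝ) - 2) from hbRn]; linarith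
    have hL3 : x n - B < 3 := by rw [show B = ((⌊x n⌋ : ℝ) - 2) from hbRn]; linarith
    have hD0 : (0:ℝ) < x n - B := by linarith
    have hDne : (x n - B) ≠ 0 := hD0.ne'
    have mem1 : B ∈ Set.Ici (0:ℝ) := hB0
    have mem2 : x n ∈ Set.Ici (0:ℝ) := hxn0
    have w1 : (0:ℝ) ≤ 1/(x n - B) := by positivity
    have w2 : (0:ℝ) ≤ 1 - 1/(x n - B) := by
      have h12 : 1/(x n - B) ≤ 1/2 := by
        apply div_le_div_of_nonneg_left (by norm_num) (by norm_num) hL2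
      linarith
    have hc := E.logConvex
    have i1 := hc.2 mem1 mem2 w1 w2 (by ring)
    have i2 := hc.2 mem1 mem2 w2 w1 (by ring)
    simp only [smul_eq_mul] at i1 i2
    have e1 : (1/(x n - B)) * B + (1 - 1/(x n - B)) * (x n) = x n - 1 := by
      field_simp
      ring
    have e2 : (1 - 1/(x n - B)) * B + (1/(x n - B)) * (x n) = B + 1 := by
      field_simp
      ring
    rw [e1] at i1
    rw [e2] at i2
    have hsum : Real.log (E.G (x n - 1)) + Real.log (E.G (B + 1))
        ≤ Real.log (E.G B) + Real.log (E.G (x n)) := by linarith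
    have p1 : 0 < E.G (x n - 1) := E.pos _ (Set.mem_Ici.2 (by linarith))
    have p2 : 0 < E.G (B + 1) := E.pos _ (Set.mem_Ici.2 (by linarith))
    have p3 : 0 < E.G B := E.pos _ mem1
    have p4 : 0 < E.G (x n) := E.pos _ mem2
    have hGineq : E.G (x n - 1) * E.G (B + 1) ≤ E.G B * E.G (x n) := by
      rw [← Real.log_mul p1.ne' p2.ne', ← Real.log_mul p3.ne' p4.ne'] at hsum
      exact (Real.log_le_log_iff (by positivity) (by positivity)).mp hsum
    have hmge : x n - 1 < (m n : ℝ) := by linarith [hmlb n]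
    have hGm : E.G (m n) ≤ E.G (x n - 1) := by
      refine (E.anti (Set.mem_Ici.2 (by linarith)) (Set.mem_Ici.2 ?_) hmge).le
      linarith [hmlb n]
    have hθle : θ n ≤ E.G (x n - 1) / E.G (x n) := by
      rw [hθ n, div_le_div_iff₀ p4 p4]
      nlinarith
    have hstep : E.G (x n - 1) / E.G (x n) ≤ E.G B / E.G (B + 1) := by
      rw [div_le_div_iff₀ p4 p2]
      nlinarith
    have hGB : E.G B = Ftail (b n) := E.agrees (b n)
    have hGB1 : E.G (B + 1) = Ftail (b n + 1) := by
      rw [← E.agrees (b n + 1)]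
      push_cast
      ring_nf
      rfl
    calc θ n ≤ E.G (x n - 1) / E.G (x n) := hθle
      _ ≤ E.G B / E.G (B+1) := hstep
      _ = Ftail (b n) / Ftail (b n + 1) := by rw [hGB, hGB1]
      _ ≤ 2/γ := hrb
  -- probability computation
  have hprob : ∀ᶠ n in atTop,
      (μ {ω | (((Finset.range n).sup fun i => X i ω : ℕ) : ℤ) ≤ m n + z}).toReal
        = (1 - Ftail (k n))^n := by
    filter_upwards [hk] with n h
    have hset : {ω | (((Finset.range n).sup fun i => X i ω : ℕ) : ℤ) ≤ m n + z}
        = {ω | (Finset.range n).sup (fun i => X i ω) ≤ k n} := by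
      ext ω
      simp only [Set.mem_setOf_eq, ← h, Int.ofNat_le]
    rw [hset, prob_max_le μ X hmeas hindep hident n (k n), ← hFtail (k n)]
  -- A n := n * Ftail (k n)
  have hA0 : Tendsto (fun n : ℕ => (n:ℝ) * Ftail (k n) - θ n * γ ^ z) atTop (nhds 0) := by
    have hd : Tendsto (fun n => θ n * (Ftail (k n) / Ftail (j n) - γ ^ z)) atTop (nhds 0) := by
      apply squeeze_zero_norm' (a := fun n : ℕ => (2/γ) * |Ftail (k n) / Ftail (j n) - γ ^ z|)
      · filter_upwards [hθbd, hθpos] with n h1 h2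
        rw [norm_mul, Real.norm_eq_abs, Real.norm_eq_abs, abs_of_pos h2]
        exact mul_le_mul_of_nonneg_right h1 (abs_nonneg _)
      · have := ((hρ.sub_const (γ ^ z)).abs).const_mul (2/γ)
        simpa using this
    refine hd.congr' ?_
    filter_upwards [hθeq] with n h
    rw [h]
    have hFj := (hsupp (j n)).ne'
    field_simp
  -- A n eventually bounded
  have hAbd : ∀ᶠ n : ℕ in atTop, (n:ℝ) * Ftail (k n) ≤ (2/γ) * γ ^ z + 1 := by
    filter_upwards [hA0.eventually (eventually_le_nhds (by norm_num : (0:ℝ) < 1)),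
      hθbd, hθpos] with n h1 h2 h3
    have : θ n * γ ^ z ≤ (2/γ) * γ ^ z := by gcongr
    nlinarith
  -- E1 : n log(1-F) + n F → 0
  have hE1 : Tendsto (fun n : ℕ => (n:ℝ) * Real.log (1 - Ftail (k n)) + (n:ℝ) * Ftail (k n))
      atTop (nhds 0) := by
    apply squeeze_zero_norm' (a := fun n : ℕ => 2 * ((2/γ) * γ ^ z + 1) * Ftail (k n))
    · filter_upwards [hFk0.eventually (eventually_le_nhds (by norm_num : (0:ℝ) < 1/2)), hAbd]
        with n h1 h2
      have h0 : 0 ≤ Ftail (k n) := (hsupp _).le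
      have key := log_one_sub_bound h0 h1
      have : (n:ℝ) * Real.log (1 - Ftail (k n)) + (n:ℝ) * Ftail (k n)
          = (n:ℝ) * (Real.log (1 - Ftail (k n)) + Ftail (k n)) := by ring
      rw [Real.norm_eq_abs, this, abs_mul, abs_of_nonneg (by positivity : (0:ℝ) ≤ (n:ℝ))]
      calc (n:ℝ) * |Real.log (1 - Ftail (k n)) + Ftail (k n)|
          ≤ (n:ℝ) * (2 * Ftail (k n)^2) := by gcongr
        _ = 2 * ((n:ℝ) * Ftail (k n)) * Ftail (k n) := by ring
        _ ≤ 2 * ((2/γ) * γ ^ z + 1) * Ftail (k n) := by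
            gcongr
    · simpa using hFk0.const_mul (2 * ((2/γ) * γ ^ z + 1))
  -- d n → 0
  have hd0 : Tendsto (fun n : ℕ => (n:ℝ) * Real.log (1 - Ftail (k n)) + θ n * γ ^ z)
      atTop (nhds 0) := by
    have := hE1.sub hA0
    simpa using this.congr fun n => by ring
  -- final assembly
  apply squeeze_zero_norm'
    (a := fun n : ℕ => |Real.exp ((n:ℝ) * Real.log (1 - Ftail (k n)) + θ n * γ ^ z) - 1|)
  · filter_upwards [hprob, hθpos,
      hFk0.eventually (eventually_le_nhds (by norm_num : (0:ℝ) < 1/2))] with n h1 h2 h3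
    rw [h1]
    have hF1 : (0:ℝ) < 1 - Ftail (k n) := by linarith
    have hpow : (1 - Ftail (k n))^n = Real.exp ((n:ℝ) * Real.log (1 - Ftail (k n))) := by
      rw [← Real.log_pow, Real.exp_log (by positivity)]
    rw [hpow]
    have hfactor : Real.exp ((n:ℝ) * Real.log (1 - Ftail (k n))) - Real.exp (-(θ n * γ ^ z))
        = Real.exp (-(θ n * γ ^ z)) *
          (Real.exp ((n:ℝ) * Real.log (1 - Ftail (k n)) + θ n * γ ^ z) - 1) := by
      rw [mul_sub, ← Real.exp_add, mul_one]
      ring_nf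
    rw [hfactor, Real.norm_eq_abs, abs_mul, abs_of_pos (Real.exp_pos _)]
    have hle1 : Real.exp (-(θ n * γ ^ z)) ≤ 1 := by
      rw [Real.exp_le_one_iff]
      nlinarith
    nlinarith [abs_nonneg (Real.exp ((n:ℝ) * Real.log (1 - Ftail (k n)) + θ n * γ ^ z) - 1)]
  · have := ((Real.continuous_exp.tendsto 0).comp hd0).sub_const 1
    simpa using this.abs
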